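/- arXiv:1211.5974 — 3 statements merged into one kernel-verified Lean document; each statement's English description precedes it below -/
import Mathlib

section
/- Let $k\ge 2$, $p=1/k$, and define $p_0=p$, $p_{n+1}=p(1-(1-p_n)^k)$. Then for all $n\ge 1$, $p_n\le \frac{2}{(k-1)n}$. -/
/-- Cubic lower bound `(1-x)^m ≥ 1 - mx + C(m,2)x² - C(m,3)x³` for `x ∈ [0,1]`. -/
lemma cubic_lb (m : ℕ) (x : ℝ) (hx0 : 0 ≤ x) (hx1 : x ≤ 1) :
    1 - m*x + m*(m-1)/2 * x^2 - m*(m-1)*(m-2)/6 * x^3 ≤ (1-x)^m := by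
  induction m with
  | zero => norm_num
  | succ m ih =>
    have h3 : (0:ℝ) ≤ m*((m:ℝ)-1)*((m:ℝ)-2) := by
      rcases Nat.lt_or_ge m 2 with h | h
      · interval_cases m <;> norm_num
      · have h2 : (2:ℝ) ≤ (m:ℝ) := by exact_mod_cast h
        have hm0 : (0:ℝ) ≤ (m:ℝ) := by linarith
        exact mul_nonneg (mul_nonneg hm0 (by linarith)) (by linarith)
    have key : (1 - m*x + m*((m:ℝ)-1)/2 * x^2 - m*((m:ℝ)-1)*((m:ℝ)-2)/6 * x^3) * (1-x)
        ≤ (1-x)^m * (1-x) := mul_le_mul_of_nonneg_right ih (by linarith)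
    rw [pow_succ (1-x) m]
    push_cast
    nlinarith [key, mul_nonneg h3 (pow_nonneg hx0 4)]

set_option maxHeartbeats 1000000 in
/-- Let `k ≥ 2`, `p = 1/k`, and define `p₀ = p`,
`p_{n+1} = p * (1 - (1 - p_n)^k)`. Then for all `n ≥ 1`, `p_n ≤ 2 / ((k-1) n)`. -/
theorem bootstrap_seq_critical_decay (k : ℕ) (hk : 2 ≤ k) (p : ℝ) (hp : p = 1 / k)
    (pseq : ℕ → ℝ) (h0 : pseq 0 = p)
    (hrec : ∀ n, pseq (n + 1) = p * (1 - (1 - pseq n) ^ k)) :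
    ∀ n : ℕ, 1 ≤ n → pseq n ≤ 2 / (((k : ℝ) - 1) * n) := by
  have hK2 : (2:ℝ) ≤ (k:ℝ) := by exact_mod_cast hk
  have hK0 : (0:ℝ) < (k:ℝ) := by linarith
  have hA0 : (0:ℝ) < (k:ℝ) - 1 := by linarith
  have hb : ∀ n, 0 < pseq n ∧ pseq n ≤ 1/(k:ℝ) := by
    intro n
    induction n with
    | zero => rw [h0, hp]; exact ⟨by positivity, le_refl _⟩
    | succ n ih =>
      obtain ⟨h1, h2⟩ := ih
      have hx1 : pseq n ≤ 1 := h2.trans (by rw [div_le_one hK0]; linarith)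
      have hpow0 : 0 ≤ (1 - pseq n)^k := pow_nonneg (by linarith) k
      have hpow1 : (1 - pseq n)^k < 1 :=
        pow_lt_one₀ (by linarith) (by linarith) (by omega)
      rw [hrec, hp]
      have hkinv : (0:ℝ) < 1/(k:ℝ) := by positivity
      constructor
      · exact mul_pos hkinv (by linarith)
      · have : (1:ℝ)/k * (1 - (1 - pseq n)^k) ≤ 1/k * 1 :=
          mul_le_mul_of_nonneg_left (by linarith) (by positivity)
        simpa using this
  have hstep : ∀ (b : ℝ) (n : ℕ), 0 ≤ b → b ≤ 1 → pseq n ≤ b →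
      pseq (n+1) ≤ b - ((k:ℝ)-1)/2 * b^2 + ((k:ℝ)-1)*((k:ℝ)-2)/6 * b^3 := by
    intro b n hb0 hb1 hnb
    have hpx : 0 < pseq n := (hb n).1
    have hpow : (1-b)^k ≤ (1 - pseq n)^k :=
      pow_le_pow_left₀ (by linarith) (by linarith) k
    have hcub := cubic_lb k b hb0 hb1
    have h1 : 1 - (1 - pseq n)^k ≤ (k:ℝ)*b - (k:ℝ)*((k:ℝ)-1)/2 * b^2 + (k:ℝ)*((k:ℝ)-1)*((k:ℝ)-2)/6 * b^3 := by
      linarith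
    rw [hrec, hp]
    have h2 := mul_le_mul_of_nonneg_left h1 (le_of_lt (by positivity : (0:ℝ) < 1/(k:ℝ)))
    calc 1/(k:ℝ) * (1 - (1 - pseq n)^k)
        ≤ 1/(k:ℝ) * ((k:ℝ)*b - (k:ℝ)*((k:ℝ)-1)/2 * b^2 + (k:ℝ)*((k:ℝ)-1)*((k:ℝ)-2)/6 * b^3) := h2
      _ = b - ((k:ℝ)-1)/2 * b^2 + ((k:ℝ)-1)*((k:ℝ)-2)/6 * b^3 := by
          field_simp
  intro n hn
  induction n, hn using Nat.le_induction with
  | base =>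
    push_cast
    calc pseq 1 ≤ 1/(k:ℝ) := (hb 1).2
      _ ≤ 2/(((k:ℝ)-1)*1) := by
          rw [div_le_div_iff₀ hK0 (by linarith)]; linarith
  | succ n hn ih =>
    have hN1 : (1:ℝ) ≤ (n:ℝ) := by exact_mod_cast hn
    have hN0 : (0:ℝ) < (n:ℝ) := by linarith
    have hAN : (0:ℝ) < ((k:ℝ)-1) * n := by positivity
    have hAN1 : (0:ℝ) < ((k:ℝ)-1) * ((n:ℝ)+1) := by positivity
    have hk1 : (1:ℝ)/(k:ℝ) ≤ 1 := by rw [div_le_one hK0]; linarith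
    have hgoal : pseq (n+1) ≤ 2/(((k:ℝ)-1)*((n:ℝ)+1)) := by
      rcases le_total (2/(((k:ℝ)-1)*(n:ℝ))) (1/(k:ℝ)) with hc | hc
      · -- use b = 2/((k-1) n)
        have hg := hstep (2/(((k:ℝ)-1)*(n:ℝ))) n (by positivity) (hc.trans hk1) ih
        have hA2 : 2*(k:ℝ) ≤ ((k:ℝ)-1) * n := by
          rw [div_le_div_iff₀ hAN hK0] at hc; linarith
        have hN3 : (3:ℝ) ≤ (n:ℝ) := by
          have h3 : 3 ≤ n := by
            by_contra h
            push_neg at h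
            interval_cases n <;> push_cast at hA2 <;> nlinarith
          exact_mod_cast h3
        have hLHS : 2/(((k:ℝ)-1)*(n:ℝ)) - ((k:ℝ)-1)/2 * (2/(((k:ℝ)-1)*(n:ℝ)))^2
              + ((k:ℝ)-1)*((k:ℝ)-2)/6 * (2/(((k:ℝ)-1)*(n:ℝ)))^3
            = (6*((k:ℝ)-1)*(n:ℝ)^2 - 6*((k:ℝ)-1)*(n:ℝ) + 4*((k:ℝ)-2))
              / (3*((k:ℝ)-1)^2*(n:ℝ)^3) := by
          field_simp; ring
        rw [hLHS] at hg
        refine hg.trans ?_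
        rw [div_le_div_iff₀ (by positivity) hAN1]
        have key : 2*((k:ℝ)-2)*((n:ℝ)+1) ≤ 3*((k:ℝ)-1)*(n:ℝ) := by nlinarith
        nlinarith [mul_le_mul_of_nonneg_left key hA0.le, mul_pos hA0 hN0,
          mul_pos (mul_pos hA0 hN0) hN0]
      · -- use b = 1/k
        have hg := hstep (1/(k:ℝ)) n (by positivity) hk1 (hb n).2
        have hB : ((k:ℝ)-1) * n ≤ 2*(k:ℝ) := by
          rw [div_le_div_iff₀ hK0 hAN] at hc; linarith
        have hLHS : 1/(k:ℝ) - ((k:ℝ)-1)/2 * (1/(k:ℝ))^2 + ((k:ℝ)-1)*((k:ℝ)-2)/6 * (1/(k:ℝ))^3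
            = (4*(k:ℝ)^2 + 2) / (6*(k:ℝ)^3) := by
          field_simp; ring
        rw [hLHS] at hg
        refine hg.trans ?_
        rw [div_le_div_iff₀ (by positivity) hAN1]
        have key : ((k:ℝ)-1)*((n:ℝ)+1) ≤ 3*(k:ℝ) - 1 := by linarith
        have h1 := mul_le_mul_of_nonneg_left key
          (by positivity : (0:ℝ) ≤ 4*(k:ℝ)^2 + 2)
        have h2 : (4*(k:ℝ)^2 + 2)*(3*(k:ℝ) - 1) ≤ 2*(6*(k:ℝ)^3) := by nlinarith
        nlinarith [h1, h2]
    push_cast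
    exact hgoal
end

section
/- Let $X=\bigotimes_{i=1}^n X_i$ be a product of $n$ independent irreducible reversible continuous-time Markov chains on finite state spaces, each with spectral gap exactly $\lambda>0$. Then the total variation mixing time of the product chain satisfies $t_{\rm mix}\ge\frac{1}{2\lambda}(\log n-\log 8)$. -/
open NormedSpace in
theorem exp_mulVec_eigen {m : Type*} [Fintype m] [DecidableEq m]
    (A : Matrix m m ℝ) (f : m → ℝ) (c : ℝ) (h : A.mulVec f = c • f) :
    (exp A).mulVec f = Real.exp c • f := by
  letI : SeminormedRing (Matrix m m ℝ) := Matrix.linftyOpSemiNormedRing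
  letI : NormedRing (Matrix m m ℝ) := Matrix.linftyOpNormedRing
  letI : NormedAlgebra ℝ (Matrix m m ℝ) := Matrix.linftyOpNormedAlgebra
  have hpow : ∀ k : ℕ, (A ^ k).mulVec f = (c ^ k) • f := by
    intro k
    induction k with
    | zero => simp [Matrix.one_mulVec]
    | succ k ih =>
      rw [pow_succ', ← Matrix.mulVec_mulVec, ih, Matrix.mulVec_smul, h, smul_smul, ← pow_succ]
  have hsum : Summable fun k : ℕ => (k.factorial⁻¹ : ℝ) • A ^ k := expSeries_summable' A
  let T : Matrix m m ℝ →L[ℝ] (m → ℝ) :=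
    { toLinearMap :=
        { toFun := fun B => B.mulVec f
          map_add' := fun B C => Matrix.add_mulVec B C f
          map_smul' := fun r B => Matrix.smul_mulVec r B f }
      cont := by fun_prop }
  have hTapp : ∀ B : Matrix m m ℝ, T B = B.mulVec f := fun _ => rfl
  have h1 : (exp A).mulVec f = T (∑' k : ℕ, (k.factorial⁻¹ : ℝ) • A ^ k) := by
    rw [hTapp, exp_eq_tsum ℝ]
  rw [h1, T.map_tsum hsum]
  have h2 : ∀ k : ℕ, T ((k.factorial⁻¹ : ℝ) • A ^ k) = ((k.factorial⁻¹ : ℝ) * c ^ k) • f := by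
    intro k
    rw [map_smul, hTapp, hpow, smul_smul]
  rw [tsum_congr h2]
  have h3 : Summable fun k : ℕ => (k.factorial⁻¹ : ℝ) * c ^ k := by
    simpa [smul_eq_mul] using expSeries_summable' (𝕂 := ℝ) c
  rw [h3.tsum_smul_const]
  congr 1
  rw [Real.exp_eq_exp_ℝ, exp_eq_tsum ℝ]
  simp [smul_eq_mul]

open NormedSpace in
section
open NormedSpace
theorem exp_entry_nonneg {m : Type*} [Fintype m] [DecidableEq m]
    (A : Matrix m m ℝ) (hA : ∀ i j, 0 ≤ A i j) (i j : m) :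
    0 ≤ exp A i j := by
  letI : SeminormedRing (Matrix m m ℝ) := Matrix.linftyOpSemiNormedRing
  letI : NormedRing (Matrix m m ℝ) := Matrix.linftyOpNormedRing
  letI : NormedAlgebra ℝ (Matrix m m ℝ) := Matrix.linftyOpNormedAlgebra
  have hpow : ∀ (k : ℕ) (a b : m), 0 ≤ (A ^ k) a b := by
    intro k
    induction k with
    | zero =>
      intro a b
      by_cases h : a = b <;> simp [Matrix.one_apply, h]
    | succ k ih =>
      intro a b
      rw [pow_succ, Matrix.mul_apply]
      exact Finset.sum_nonneg fun u _ => mul_nonneg (ih a u) (hA u b)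
  have hsum : Summable fun k : ℕ => (k.factorial⁻¹ : ℝ) • A ^ k := expSeries_summable' A
  let T : Matrix m m ℝ →L[ℝ] ℝ :=
    { toLinearMap :=
        { toFun := fun B => B i j
          map_add' := fun B C => rfl
          map_smul' := fun r B => rfl }
      cont := by fun_prop }
  have hTapp : ∀ B : Matrix m m ℝ, T B = B i j := fun _ => rfl
  have h1 : exp A i j = T (∑' k : ℕ, (k.factorial⁻¹ : ℝ) • A ^ k) := by
    rw [hTapp, exp_eq_tsum ℝ]
  rw [h1, T.map_tsum hsum]
  refine tsum_nonneg fun k => ?_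
  rw [map_smul, hTapp]
  have : (0:ℝ) ≤ (k.factorial⁻¹ : ℝ) := by positivity
  exact smul_nonneg this (hpow k i j)

theorem exp_smul_entry_nonneg {m : Type*} [Fintype m] [DecidableEq m]
    (L : Matrix m m ℝ) (hoff : ∀ s u, s ≠ u → 0 ≤ L s u) (t : ℝ) (ht : 0 ≤ t)
    (s u : m) : 0 ≤ exp (t • L) s u := by
  set c : ℝ := t * ∑ v, |L v v| with hc
  have hcv : ∀ v, t * |L v v| ≤ c := fun v =>
    mul_le_mul_of_nonneg_left
      (Finset.single_le_sum (fun w _ => abs_nonneg (L w w)) (Finset.mem_univ v)) ht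
  have hB : ∀ a b, 0 ≤ (t • L + c • (1 : Matrix m m ℝ)) a b := by
    intro a b
    by_cases h : a = b
    · subst h
      simp only [Matrix.add_apply, Matrix.smul_apply, Matrix.one_apply_eq, smul_eq_mul,
        mul_one]
      have := hcv a
      have h2 := mul_le_mul_of_nonneg_left (neg_abs_le (L a a)) ht
      have h3 : t * -|L a a| = -(t * |L a a|) := mul_neg t _
      linarith
    · simp only [Matrix.add_apply, Matrix.smul_apply, Matrix.one_apply_ne h, smul_eq_mul,
        mul_zero, add_zero]
      exact mul_nonneg ht (hoff a b h)
  have hsplit : t • L = (t • L + c • (1 : Matrix m m ℝ)) + (-c) • (1 : Matrix m m ℝ) := by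
    rw [add_assoc, ← add_smul, add_neg_cancel, zero_smul, add_zero]
  have hcomm : Commute (t • L + c • (1 : Matrix m m ℝ)) ((-c) • (1 : Matrix m m ℝ)) :=
    (Commute.one_right _).smul_right _
  have hexp1 : exp ((-c) • (1 : Matrix m m ℝ)) = Real.exp (-c) • (1 : Matrix m m ℝ) := by
    letI : SeminormedRing (Matrix m m ℝ) := Matrix.linftyOpSemiNormedRing
    letI : NormedRing (Matrix m m ℝ) := Matrix.linftyOpNormedRing
    letI : NormedAlgebra ℝ (Matrix m m ℝ) := Matrix.linftyOpNormedAlgebra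
    rw [← Algebra.algebraMap_eq_smul_one]
    convert (algebraMap_exp_comm (𝕂 := ℝ) (𝔸 := Matrix m m ℝ) (-c)).symm using 1
    rfl
    rw [Algebra.algebraMap_eq_smul_one, Real.exp_eq_exp_ℝ]
  have hadd := Matrix.exp_add_of_commute (t • L + c • (1 : Matrix m m ℝ))
    ((-c) • (1 : Matrix m m ℝ)) hcomm
  rw [hsplit, hadd, hexp1]
  have : ((exp (t • L + c • (1 : Matrix m m ℝ))) * (Real.exp (-c) • (1 : Matrix m m ℝ))) s u
      = Real.exp (-c) * (exp (t • L + c • (1 : Matrix m m ℝ))) s u := by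
    rw [Matrix.mul_smul, Matrix.mul_one, Matrix.smul_apply, smul_eq_mul]
  rw [this]
  exact mul_nonneg (Real.exp_nonneg _) (exp_entry_nonneg _ hB s u)
end

theorem sum_prod_eval {n : ℕ} {S : Fin n → Type*} [∀ i, Fintype (S i)]
    (h : ∀ i, S i → ℝ) :
    ∑ ω : ∀ i, S i, ∏ i, h i (ω i) = ∏ i, ∑ s, h i s := by
  rw [Finset.prod_univ_sum, Fintype.piFinset_univ]

theorem prod_update_eval {n : ℕ} {S : Fin n → Type*} [∀ i, Fintype (S i)]
    (i : Fin n) (g : S i → ℝ) (ω : ∀ k, S k) :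
    ∏ k, Function.update (fun m (_ : S m) => (1:ℝ)) i g k (ω k) = g (ω i) := by
  refine Finset.prod_eq_single_of_mem i (Finset.mem_univ i) ?_ |>.trans ?_
  · intro k _ hk
    rw [Function.update_of_ne hk]
  · rw [Function.update_self]

theorem prod_measure_pair {n : ℕ} {S : Fin n → Type*} [∀ i, Fintype (S i)]
    (ρ : ∀ k, S k → ℝ) (g : ∀ k, S k → ℝ)
    (hρ1 : ∀ k, ∑ s, ρ k s = 1) (hg0 : ∀ k, ∑ s, ρ k s * g k s = 0) (i j : Fin n) :
    ∑ ω : ∀ k, S k, (∏ k, ρ k (ω k)) * g i (ω i) * g j (ω j)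
      = if i = j then ∑ s, ρ i s * g i s ^ 2 else 0 := by
  classical
  set A : ∀ k, S k → ℝ := Function.update (fun m (_ : S m) => (1:ℝ)) i (g i) with hA
  set B : ∀ k, S k → ℝ := Function.update (fun m (_ : S m) => (1:ℝ)) j (g j) with hB
  have key : ∑ ω : ∀ k, S k, (∏ k, ρ k (ω k)) * g i (ω i) * g j (ω j)
      = ∏ k, ∑ s, ρ k s * A k s * B k s := by
    rw [← sum_prod_eval (fun k s => ρ k s * A k s * B k s)]
    refine Finset.sum_congr rfl fun ω _ => ?_
    simp_rw [Finset.prod_mul_distrib]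
    rw [prod_update_eval i (g i) ω, prod_update_eval j (g j) ω]
  rw [key]
  by_cases hij : i = j
  · subst hij
    simp only [if_pos rfl]
    refine Finset.prod_eq_single_of_mem i (Finset.mem_univ i) ?_ |>.trans ?_
    · intro k _ hk
      have : A k = fun _ => (1:ℝ) := Function.update_of_ne hk _ _
      rw [hA] at this
      simp only [hA, hB, this]
      simpa [mul_one] using hρ1 k
    · simp only [hA, hB, Function.update_self]
      refine Finset.sum_congr rfl fun s _ => by ring
  · simp only [if_neg hij]
    refine Finset.prod_eq_zero (Finset.mem_univ i) ?_
    have hBi : B i = fun _ => (1:ℝ) := Function.update_of_ne hij _ _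
    have hAi : A i = g i := Function.update_self _ _ _
    simp only [hAi, hBi]
    simpa [mul_one] using hg0 i

theorem prod_measure_mean {n : ℕ} {S : Fin n → Type*} [∀ i, Fintype (S i)]
    (ρ : ∀ k, S k → ℝ) (g : ∀ k, S k → ℝ)
    (hρ1 : ∀ k, ∑ s, ρ k s = 1) (hg0 : ∀ k, ∑ s, ρ k s * g k s = 0) (i : Fin n) :
    ∑ ω : ∀ k, S k, (∏ k, ρ k (ω k)) * g i (ω i) = 0 := by
  classical
  set A : ∀ k, S k → ℝ := Function.update (fun m (_ : S m) => (1:ℝ)) i (g i) with hA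
  have key : ∑ ω : ∀ k, S k, (∏ k, ρ k (ω k)) * g i (ω i)
      = ∏ k, ∑ s, ρ k s * A k s := by
    rw [← sum_prod_eval (fun k s => ρ k s * A k s)]
    refine Finset.sum_congr rfl fun ω _ => ?_
    simp_rw [Finset.prod_mul_distrib]
    rw [prod_update_eval i (g i) ω]
  rw [key]
  refine Finset.prod_eq_zero (Finset.mem_univ i) ?_
  simp only [hA, Function.update_self]
  exact hg0 i

theorem prod_measure_var {n : ℕ} {S : Fin n → Type*} [∀ i, Fintype (S i)]
    (ρ : ∀ k, S k → ℝ) (g : ∀ k, S k → ℝ)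
    (hρ1 : ∀ k, ∑ s, ρ k s = 1) (hg0 : ∀ k, ∑ s, ρ k s * g k s = 0) :
    ∑ ω : ∀ k, S k, (∏ k, ρ k (ω k)) * (∑ k, g k (ω k)) ^ 2
      = ∑ i, ∑ s, ρ i s * g i s ^ 2 := by
  classical
  have expand : ∀ ω : ∀ k, S k, (∏ k, ρ k (ω k)) * (∑ k, g k (ω k)) ^ 2
      = ∑ i, ∑ j, (∏ k, ρ k (ω k)) * g i (ω i) * g j (ω j) := by
    intro ω
    rw [sq, Finset.sum_mul_sum, Finset.mul_sum]
    refine Finset.sum_congr rfl fun i _ => ?_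
    rw [Finset.mul_sum]
    exact Finset.sum_congr rfl fun j _ => by ring
  rw [Finset.sum_congr rfl fun ω _ => expand ω, Finset.sum_comm]
  refine Finset.sum_congr rfl fun i _ => ?_
  rw [Finset.sum_comm]
  have : ∀ j : Fin n, ∑ ω : ∀ k, S k, (∏ k, ρ k (ω k)) * g i (ω i) * g j (ω j)
      = if i = j then ∑ s, ρ i s * g i s ^ 2 else 0 :=
    fun j => prod_measure_pair ρ g hρ1 hg0 i j
  rw [Finset.sum_congr rfl fun j _ => this j, Finset.sum_ite_eq]
  simp

theorem prod_measure_moment_bound {n : ℕ} {S : Fin n → Type*} [∀ i, Fintype (S i)]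
    (ρ : ∀ k, S k → ℝ) (g : ∀ k, S k → ℝ)
    (hρ1 : ∀ k, ∑ s, ρ k s = 1)
    (hg0 : ∀ k, ∑ s, ρ k s * g k s = 0) (hgvar : ∀ k, ∑ s, ρ k s * g k s ^ 2 ≤ 1)
    (z : ℝ) :
    ∑ ω : ∀ k, S k, (∏ k, ρ k (ω k)) * ((∑ k, g k (ω k)) + z) ^ 2 ≤ n + z ^ 2 := by
  classical
  have expand : ∀ ω : ∀ k, S k, (∏ k, ρ k (ω k)) * ((∑ k, g k (ω k)) + z) ^ 2
      = (∏ k, ρ k (ω k)) * (∑ k, g k (ω k)) ^ 2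
        + 2 * z * ((∏ k, ρ k (ω k)) * (∑ k, g k (ω k)))
        + z ^ 2 * (∏ k, ρ k (ω k)) := fun ω => by ring
  rw [Finset.sum_congr rfl fun ω _ => expand ω, Finset.sum_add_distrib,
    Finset.sum_add_distrib, ← Finset.mul_sum, ← Finset.mul_sum]
  have hmean : ∑ ω : ∀ k, S k, (∏ k, ρ k (ω k)) * (∑ k, g k (ω k)) = 0 := by
    have h1 : ∀ ω : ∀ k, S k, (∏ k, ρ k (ω k)) * (∑ k, g k (ω k))
        = ∑ i, (∏ k, ρ k (ω k)) * g i (ω i) := fun ω => Finset.mul_sum _ _ _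
    rw [Finset.sum_congr rfl fun ω _ => h1 ω, Finset.sum_comm]
    rw [Finset.sum_congr rfl fun i _ => prod_measure_mean ρ g hρ1 hg0 i]
    simp
  have hsum1 : ∑ ω : ∀ k, S k, ∏ k, ρ k (ω k) = 1 := by
    rw [sum_prod_eval]
    exact Finset.prod_eq_one fun k _ => hρ1 k
  rw [hmean, hsum1, prod_measure_var ρ g hρ1 hg0]
  have hbd : ∑ i, ∑ s, ρ i s * g i s ^ 2 ≤ (n : ℝ) := by
    calc ∑ i : Fin n, ∑ s, ρ i s * g i s ^ 2 ≤ ∑ _i : Fin n, (1:ℝ) :=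
          Finset.sum_le_sum fun i _ => hgvar i
      _ = n := by simp
  linarith

theorem cantelli_tail {Ω : Type*} [Fintype Ω] (p : Ω → ℝ) (Wf : Ω → ℝ) (C a u : ℝ)
    [DecidablePred fun ω => a ≤ Wf ω]
    (hp : ∀ ω, 0 ≤ p ω) (hau : 0 < a + u)
    (hmom : ∑ ω, p ω * (Wf ω + u) ^ 2 ≤ C) :
    (∑ ω ∈ Finset.univ.filter (fun ω => a ≤ Wf ω), p ω) * (a + u) ^ 2 ≤ C := by
  calc (∑ ω ∈ Finset.univ.filter (fun ω => a ≤ Wf ω), p ω) * (a + u) ^ 2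
      = ∑ ω ∈ Finset.univ.filter (fun ω => a ≤ Wf ω), p ω * (a + u) ^ 2 := by
        rw [Finset.sum_mul]
    _ ≤ ∑ ω ∈ Finset.univ.filter (fun ω => a ≤ Wf ω), p ω * (Wf ω + u) ^ 2 := by
        refine Finset.sum_le_sum fun ω hω => ?_
        have hωA : a ≤ Wf ω := (Finset.mem_filter.mp hω).2
        exact mul_le_mul_of_nonneg_left
          (pow_le_pow_left₀ hau.le (by linarith) 2) (hp ω)
    _ ≤ ∑ ω, p ω * (Wf ω + u) ^ 2 :=
        Finset.sum_le_sum_of_subset_of_nonneg (Finset.filter_subset _ _)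
          (fun ω _ _ => mul_nonneg (hp ω) (sq_nonneg _))
    _ ≤ C := hmom

set_option maxHeartbeats 1000000 in
/-- Let `X = ⊗_{i=1}^n X_i` be a product of `n` independent irreducible
continuous-time Markov chains on finite state spaces, each reversible w.r.t. a (positive)
probability vector `π i`, and each with spectral gap exactly `λ > 0` (i.e. the Poincaré
inequality holds with constant `λ` and `λ` is attained by an eigenfunction orthogonal to
constants). Then the total-variation mixing time of the product chain satisfies
`t_mix ≥ (log n - log 8) / (2λ)`: any time `t ≥ 0` at which every starting state is within
total-variation distance `1/4` of the product stationary measure satisfies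
`t ≥ (log n - log 8)/(2λ)`. -/
theorem product_chain_mixing_lower_bound (n : ℕ) (hn : 1 ≤ n)
    (S : Fin n → Type*) [∀ i, Fintype (S i)] [∀ i, DecidableEq (S i)]
    (L : ∀ i, Matrix (S i) (S i) ℝ) (π : ∀ i, S i → ℝ) (lam : ℝ) (hlam : 0 < lam)
    (hπpos : ∀ i s, 0 < π i s) (hπ1 : ∀ i, ∑ s, π i s = 1)
    (hrows : ∀ i s, ∑ u, L i s u = 0)
    (hoff : ∀ i s u, s ≠ u → 0 ≤ L i s u)
    (hirr : ∀ i, ∀ g : S i → ℝ, (L i).mulVec g = 0 → ∃ a : ℝ, g = fun _ => a)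
    (hrev : ∀ i s u, π i s * L i s u = π i u * L i u s)
    (hgap : ∀ i, ∀ g : S i → ℝ, (∑ s, π i s * g s = 0) →
      lam * ∑ s, π i s * g s ^ 2 ≤ -∑ s, π i s * g s * (L i).mulVec g s)
    (heig : ∀ i, ∃ f : S i → ℝ, f ≠ 0 ∧ (L i).mulVec f = (-lam) • f ∧
      ∑ s, π i s * f s = 0) :
    ∀ t : ℝ, 0 ≤ t →
      (∀ x : ∀ i, S i,
        (1 / 2) * ∑ ω : ∀ i, S i,
            |(∏ i, π i (ω i)) - ∏ i, NormedSpace.exp (t • L i) (x i) (ω i)| ≤ 1 / 4) →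
      (Real.log n - Real.log 8) / (2 * lam) ≤ t := by
  classical
  intro t ht H
  obtain ⟨r, hrdef⟩ : ∃ r : ℝ, r = Real.exp (-(lam * t)) := ⟨_, rfl⟩
  have hr0 : 0 < r := hrdef ▸ Real.exp_pos _
  -- normalized eigenfunctions with maximizing points
  have key : ∀ i, ∃ (f : S i → ℝ) (x : S i), (∀ s, |f s| ≤ 1) ∧ f x = 1 ∧
      (∑ s, π i s * f s = 0) ∧
      (∀ s : S i, ∑ u, NormedSpace.exp (t • L i) s u * f u = r * f s) := by
    intro i
    obtain ⟨f0, hf0ne, hf0eig, hf0mean⟩ := heig i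
    obtain ⟨s0, hs0⟩ := Function.ne_iff.mp hf0ne
    obtain ⟨x, -, hx⟩ := Finset.exists_max_image Finset.univ (fun s => |f0 s|)
      ⟨s0, Finset.mem_univ s0⟩
    have hx0 : f0 x ≠ 0 := by
      intro h0
      have h1 := hx s0 (Finset.mem_univ s0)
      rw [h0, abs_zero] at h1
      exact hs0 (abs_nonpos_iff.mp h1)
    refine ⟨fun s => f0 s / f0 x, x, ?_, div_self hx0, ?_, ?_⟩
    · intro s
      rw [abs_div]
      exact div_le_one_of_le₀ (hx s (Finset.mem_univ s)) (abs_nonneg _)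
    · have h1 : ∀ s, π i s * (f0 s / f0 x) = (π i s * f0 s) / f0 x := fun s => by ring
      rw [Finset.sum_congr rfl fun s _ => h1 s, ← Finset.sum_div, hf0mean, zero_div]
    · have heq : (t • L i).mulVec (fun s => f0 s / f0 x)
          = (-(lam * t)) • (fun s => f0 s / f0 x) := by
        have h1 : (fun s => f0 s / f0 x) = (f0 x)⁻¹ • f0 := by
          funext s
          simp [div_eq_inv_mul]
        rw [h1, Matrix.mulVec_smul, Matrix.smul_mulVec, hf0eig]
        funext s
        simp only [Pi.smul_apply, smul_eq_mul]
        ring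
      have h2 := exp_mulVec_eigen (t • L i) _ _ heq
      intro s
      have h3 := congrFun h2 s
      simpa [Matrix.mulVec, dotProduct, hrdef] using h3
  choose f x hf1 hfx hfmean hfeig using key
  have hH := H x
  set ν : ∀ i, S i → ℝ := fun i s => NormedSpace.exp (t • L i) (x i) s with hνdef
  have hν0 : ∀ i s, 0 ≤ ν i s := fun i s =>
    exp_smul_entry_nonneg (L i) (hoff i) t ht (x i) s
  have hν1 : ∀ i, ∑ s, ν i s = 1 := by
    intro i
    have h0 : (t • L i).mulVec (fun _ => (1:ℝ)) = (0:ℝ) • (fun _ => (1:ℝ)) := by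
      funext s
      simp only [Matrix.mulVec, dotProduct, Matrix.smul_apply, smul_eq_mul,
        mul_one, Pi.smul_apply, zero_smul, Pi.zero_apply]
      rw [← Finset.mul_sum, hrows i s, mul_zero]
    have h2 := congrFun (exp_mulVec_eigen (t • L i) _ _ h0) (x i)
    simpa [Matrix.mulVec, dotProduct, Real.exp_zero] using h2
  have hνf : ∀ i, ∑ s, ν i s * f i s = r := by
    intro i
    have := hfeig i (x i)
    rw [hfx i, mul_one] at this
    exact this
  -- variance bounds
  have hπ0 : ∀ i s, 0 ≤ π i s := fun i s => (hπpos i s).le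
  have hsq : ∀ i s, (f i s) ^ 2 ≤ 1 := by
    intro i s
    have := hf1 i s
    nlinarith [abs_nonneg (f i s), sq_abs (f i s)]
  have varbd : ∀ i (ρ : S i → ℝ) (μ : ℝ), (∀ s, 0 ≤ ρ s) → (∑ s, ρ s = 1) →
      (∑ s, ρ s * f i s = μ) → ∑ s, ρ s * (f i s - μ) ^ 2 ≤ 1 := by
    intro i ρ μ hρ0 hρ1 hρf
    have h1 : ∑ s, ρ s * (f i s - μ) ^ 2
        = (∑ s, ρ s * f i s ^ 2) - 2 * μ * (∑ s, ρ s * f i s)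
          + μ ^ 2 * (∑ s, ρ s) := by
      rw [Finset.mul_sum, Finset.mul_sum, ← Finset.sum_sub_distrib, ← Finset.sum_add_distrib]
      exact Finset.sum_congr rfl fun s _ => by ring
    have h2 : ∑ s, ρ s * f i s ^ 2 ≤ 1 := by
      calc ∑ s, ρ s * f i s ^ 2 ≤ ∑ s, ρ s * 1 :=
            Finset.sum_le_sum fun s _ => mul_le_mul_of_nonneg_left (hsq i s) (hρ0 s)
        _ = ∑ s, ρ s := by simp
        _ = 1 := hρ1
    rw [h1, hρf, hρ1]
    nlinarith [sq_nonneg μ]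
  have hvarπ : ∀ i, ∑ s, π i s * (f i s) ^ 2 ≤ 1 := by
    intro i
    have := varbd i (π i) 0 (hπ0 i) (hπ1 i) (hfmean i)
    simpa using this
  have hmeanν : ∀ i, ∑ s, ν i s * (f i s - r) = 0 := by
    intro i
    have h1 : ∀ s, ν i s * (f i s - r) = ν i s * f i s - r * ν i s := fun s => by ring
    rw [Finset.sum_congr rfl fun s _ => h1 s, Finset.sum_sub_distrib, hνf i,
      ← Finset.mul_sum, hν1 i, mul_one, sub_self]
  have hvarν : ∀ i, ∑ s, ν i s * (f i s - r) ^ 2 ≤ 1 :=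
    fun i => varbd i (ν i) r (hν0 i) (hν1 i) (hνf i)
  -- moment bounds
  have hQmom := prod_measure_moment_bound π f hπ1 hfmean hvarπ (2 / r)
  have hPmom := prod_measure_moment_bound ν (fun k s => f k s - r) hν1 hmeanν hvarν (-(2 / r))
  have hPmom' : ∑ ω : ∀ k, S k, (∏ k, ν k (ω k))
      * (((n : ℝ) * r - ∑ k, f k (ω k)) + 2 / r) ^ 2 ≤ (n : ℝ) + (2 / r) ^ 2 := by
    refine le_trans (le_of_eq (Finset.sum_congr rfl fun ω _ => ?_))
      (le_trans hPmom (by rw [neg_sq]))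
    congr 1
    have hs : ∑ k, (f k (ω k) - r) = (∑ k, f k (ω k)) - (n : ℝ) * r := by
      rw [Finset.sum_sub_distrib, Finset.sum_const, Finset.card_univ, Fintype.card_fin,
        nsmul_eq_mul]
    rw [hs]
    ring
  -- tail bounds
  have hQ0 : ∀ ω : ∀ i, S i, 0 ≤ ∏ i, π i (ω i) :=
    fun ω => Finset.prod_nonneg fun i _ => hπ0 i (ω i)
  have hP0 : ∀ ω : ∀ i, S i, 0 ≤ ∏ i, ν i (ω i) :=
    fun ω => Finset.prod_nonneg fun i _ => hν0 i (ω i)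
  have hn1 : (1:ℝ) ≤ (n:ℝ) := by exact_mod_cast hn
  have hau : 0 < (n : ℝ) * r / 2 + 2 / r := by positivity
  have hQtail := cantelli_tail (fun ω : ∀ i, S i => ∏ i, π i (ω i))
    (fun ω => ∑ k, f k (ω k)) ((n : ℝ) + (2 / r) ^ 2) ((n : ℝ) * r / 2) (2 / r)
    hQ0 hau hQmom
  have hPtail := cantelli_tail (fun ω : ∀ i, S i => ∏ i, ν i (ω i))
    (fun ω => (n : ℝ) * r - ∑ k, f k (ω k)) ((n : ℝ) + (2 / r) ^ 2) ((n : ℝ) * r / 2) (2 / r)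
    hP0 hau hPmom'
  -- notation
  obtain ⟨D, hDdef⟩ : ∃ D : ℝ, D = ((n : ℝ) * r / 2 + 2 / r) ^ 2 := ⟨_, rfl⟩
  obtain ⟨C, hCdef⟩ : ∃ C : ℝ, C = (n : ℝ) + (2 / r) ^ 2 := ⟨_, rfl⟩
  rw [← hDdef, ← hCdef] at hQtail hPtail
  have hDpos : 0 < D := by rw [hDdef]; positivity
  set A : Finset (∀ i, S i) :=
    Finset.univ.filter (fun ω => (n : ℝ) * r / 2 ≤ ∑ k, f k (ω k)) with hAdef
  set B : Finset (∀ i, S i) :=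
    Finset.univ.filter (fun ω => (n : ℝ) * r / 2 ≤ (n : ℝ) * r - ∑ k, f k (ω k)) with hBdef
  -- complement of A is contained in B
  have hsub : Finset.univ.filter (fun ω : ∀ i, S i =>
      ¬ ((n : ℝ) * r / 2 ≤ ∑ k, f k (ω k))) ⊆ B := by
    intro ω hω
    rw [Finset.mem_filter] at hω ⊢
    refine ⟨Finset.mem_univ _, ?_⟩
    have := hω.2
    push_neg at this
    linarith
  have hBP : (∑ ω ∈ Finset.univ.filter (fun ω : ∀ i, S i =>
      ¬ ((n : ℝ) * r / 2 ≤ ∑ k, f k (ω k))), ∏ i, ν i (ω i)) * D ≤ C := by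
    refine le_trans (mul_le_mul_of_nonneg_right ?_ hDpos.le) hPtail
    exact Finset.sum_le_sum_of_subset_of_nonneg hsub fun ω _ _ => hP0 ω
  -- total masses
  have hQ1 : ∑ ω : ∀ i, S i, ∏ i, π i (ω i) = 1 := by
    rw [sum_prod_eval]
    exact Finset.prod_eq_one fun i _ => hπ1 i
  have hP1 : ∑ ω : ∀ i, S i, ∏ i, ν i (ω i) = 1 := by
    rw [sum_prod_eval]
    exact Finset.prod_eq_one fun i _ => hν1 i
  -- TV lower bound
  have hsplitQ := Finset.sum_filter_add_sum_filter_not Finset.univ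
    (fun ω : ∀ i, S i => (n : ℝ) * r / 2 ≤ ∑ k, f k (ω k)) (fun ω => ∏ i, π i (ω i))
  have hsplitP := Finset.sum_filter_add_sum_filter_not Finset.univ
    (fun ω : ∀ i, S i => (n : ℝ) * r / 2 ≤ ∑ k, f k (ω k)) (fun ω => ∏ i, ν i (ω i))
  have habs1 : ∑ ω ∈ A, ((∏ i, ν i (ω i)) - ∏ i, π i (ω i))
      ≤ ∑ ω ∈ A, |(∏ i, π i (ω i)) - ∏ i, ν i (ω i)| :=
    Finset.sum_le_sum fun ω _ => by
      rw [abs_sub_comm]; exact le_abs_self _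
  have habs2 : ∑ ω ∈ Finset.univ.filter (fun ω : ∀ i, S i =>
        ¬ ((n : ℝ) * r / 2 ≤ ∑ k, f k (ω k))),
        ((∏ i, π i (ω i)) - ∏ i, ν i (ω i))
      ≤ ∑ ω ∈ Finset.univ.filter (fun ω : ∀ i, S i =>
        ¬ ((n : ℝ) * r / 2 ≤ ∑ k, f k (ω k))),
        |(∏ i, π i (ω i)) - ∏ i, ν i (ω i)| :=
    Finset.sum_le_sum fun ω _ => le_abs_self _
  have habssplit := Finset.sum_filter_add_sum_filter_not Finset.univ
    (fun ω : ∀ i, S i => (n : ℝ) * r / 2 ≤ ∑ k, f k (ω k))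
    (fun ω => |(∏ i, π i (ω i)) - ∏ i, ν i (ω i)|)
  -- name sums
  have hQA := hQtail
  have hdiff : (∑ ω ∈ A, ∏ i, ν i (ω i)) - (∑ ω ∈ A, ∏ i, π i (ω i)) ≤ 1 / 4 := by
    have e1 : ∑ ω ∈ A, ((∏ i, ν i (ω i)) - ∏ i, π i (ω i))
        = (∑ ω ∈ A, ∏ i, ν i (ω i)) - (∑ ω ∈ A, ∏ i, π i (ω i)) :=
      Finset.sum_sub_distrib _ _
    have e2 : ∑ ω ∈ Finset.univ.filter (fun ω : ∀ i, S i =>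
          ¬ ((n : ℝ) * r / 2 ≤ ∑ k, f k (ω k))),
          ((∏ i, π i (ω i)) - ∏ i, ν i (ω i))
        = (∑ ω ∈ Finset.univ.filter (fun ω : ∀ i, S i =>
            ¬ ((n : ℝ) * r / 2 ≤ ∑ k, f k (ω k))), ∏ i, π i (ω i))
          - (∑ ω ∈ Finset.univ.filter (fun ω : ∀ i, S i =>
            ¬ ((n : ℝ) * r / 2 ≤ ∑ k, f k (ω k))), ∏ i, ν i (ω i)) :=
      Finset.sum_sub_distrib _ _
    rw [e1] at habs1
    rw [e2] at habs2
    linarith [hH, habs1, habs2, hsplitQ, hsplitP, habssplit]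
  -- combine with tails
  have hq8 : (n : ℝ) * r ^ 2 ≤ 8 := by
    have hSAP_lb : 1 - C / D ≤ ∑ ω ∈ A, ∏ i, ν i (ω i) := by
      have h1 : (∑ ω ∈ Finset.univ.filter (fun ω : ∀ i, S i =>
          ¬ ((n : ℝ) * r / 2 ≤ ∑ k, f k (ω k))), ∏ i, ν i (ω i)) ≤ C / D := by
        rw [le_div_iff₀ hDpos]
        exact hBP
      linarith [hsplitP]
    have hSAQ_ub : (∑ ω ∈ A, ∏ i, π i (ω i)) ≤ C / D := by
      rw [le_div_iff₀ hDpos]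
      exact hQA
    have h3D8C : 3 * D ≤ 8 * C := by
      have hCD : 3 / 8 ≤ C / D := by linarith
      rw [le_div_iff₀ hDpos] at hCD
      nlinarith [hCD]
    -- scale by r^2
    have hscale := mul_le_mul_of_nonneg_right h3D8C (sq_nonneg r)
    have hid1 : D * r ^ 2 = ((n:ℝ) * r ^ 2 / 2 + 2) ^ 2 := by
      rw [hDdef]
      field_simp
    have hid2 : C * r ^ 2 = (n:ℝ) * r ^ 2 + 4 := by
      rw [hCdef]
      field_simp
      ring
    have hscale' : 3 * ((n:ℝ) * r ^ 2 / 2 + 2) ^ 2 ≤ 8 * ((n:ℝ) * r ^ 2 + 4) := by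
      calc 3 * ((n:ℝ) * r ^ 2 / 2 + 2) ^ 2 = 3 * D * r ^ 2 := by rw [← hid1]; ring
        _ ≤ 8 * C * r ^ 2 := hscale
        _ = 8 * ((n:ℝ) * r ^ 2 + 4) := by rw [mul_assoc, hid2]
    nlinarith [sq_nonneg ((n:ℝ) * r ^ 2 - 8), hscale']
  -- conclude
  rw [div_le_iff₀ (by linarith : (0:ℝ) < 2 * lam)]
  have hrr : r ^ 2 * Real.exp (2 * lam * t) = 1 := by
    rw [hrdef, sq, ← Real.exp_add, ← Real.exp_add]
    ring_nf
    exact Real.exp_zero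
  have h8 : (n:ℝ) ≤ 8 * Real.exp (2 * lam * t) := by
    have h1 := mul_le_mul_of_nonneg_right hq8 (Real.exp_pos (2 * lam * t)).le
    calc (n:ℝ) = (n:ℝ) * (r ^ 2 * Real.exp (2 * lam * t)) := by rw [hrr, mul_one]
      _ = (n:ℝ) * r ^ 2 * Real.exp (2 * lam * t) := by ring
      _ ≤ 8 * Real.exp (2 * lam * t) := h1
  have hlog : Real.log (n:ℝ) ≤ Real.log 8 + 2 * lam * t := by
    calc Real.log (n:ℝ) ≤ Real.log (8 * Real.exp (2 * lam * t)) :=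
          Real.log_le_log (by linarith) h8
      _ = Real.log 8 + 2 * lam * t := by
          rw [Real.log_mul (by norm_num) (Real.exp_ne_zero _), Real.log_exp]
  linarith
end

section
/- Let $k\ge 2$, $p=1/k$, $\mu$ the Bernoulli($p$) product measure on the $k$-ary rooted tree of depth $L$, and $N_r$ the size of the occupied cluster of the root. Then $\mathrm{Var}(N_r)=\frac{k-1}{k^2}\sum_{j=1}^{L+1} j^2$; in particular there is a constant $c'>0$ (depending only on $k$) such that $\mathrm{Var}(N_r)\ge c' L^3$. -/
/-- The vertex set of the `k`-ary rooted tree of depth `L`: a vertex at level `m ≤ L`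
is a word of length `m` over the alphabet `Fin k` (the root is the empty word). -/
abbrev TreeVtx (k L : ℕ) := Σ m : Fin (L + 1), Fin (m : ℕ) → Fin k

/-- The ancestor of a vertex `x` at level `j ≤ level of x` (its prefix of length `j`);
`j = x.1` gives `x` itself and `j = 0` gives the root. -/
def ancestor {k L : ℕ} (x : TreeVtx k L) (j : Fin (L + 1)) (h : (j : ℕ) ≤ (x.1 : ℕ)) :
    TreeVtx k L :=
  ⟨j, fun i => x.2 ⟨(i : ℕ), lt_of_lt_of_le i.2 h⟩⟩

/-- `x` belongs to the occupied cluster of the root: every vertex on the path from the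
root to `x` (both included) is occupied. -/
def inRootCluster {k L : ℕ} (η : TreeVtx k L → Bool) (x : TreeVtx k L) : Prop :=
  ∀ (j : Fin (L + 1)) (h : (j : ℕ) ≤ (x.1 : ℕ)), η (ancestor x j h) = true

instance {k L : ℕ} (η : TreeVtx k L → Bool) (x : TreeVtx k L) :
    Decidable (inRootCluster η x) := by
  unfold inRootCluster; infer_instance

/-- The size `N_r(η)` of the occupied cluster of the root. -/
noncomputable def clusterSize (k L : ℕ) (η : TreeVtx k L → Bool) : ℝ :=
  ∑ x : TreeVtx k L, if inRootCluster η x then (1 : ℝ) else 0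

/-- Bernoulli(p) weight of a single spin value. -/
def bern (p : ℝ) (b : Bool) : ℝ := if b then p else 1 - p

/-- The mean `μ(N_r)` of the cluster size of the root under the Bernoulli(p) product
measure on the `k`-ary rooted tree of depth `L`. -/
noncomputable def meanClusterSize (k L : ℕ) (p : ℝ) : ℝ :=
  ∑ η : TreeVtx k L → Bool, (∏ x, bern p (η x)) * clusterSize k L η

/-- The variance `Var(N_r)` of the cluster size of the root under the Bernoulli(p)
product measure on the `k`-ary rooted tree of depth `L`. -/
noncomputable def varClusterSize (k L : ℕ) (p : ℝ) : ℝ :=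
  (∑ η : TreeVtx k L → Bool, (∏ x, bern p (η x)) * clusterSize k L η ^ 2) -
    (meanClusterSize k L p) ^ 2

section Aux
variable {k L : ℕ}

/-! ### The occupation indicator of a finite set, and the product-measure computation -/

def occInd (S : Finset (TreeVtx k L)) (η : TreeVtx k L → Bool) : ℝ :=
  if ∀ v ∈ S, η v = true then 1 else 0

lemma occInd_mul (S T : Finset (TreeVtx k L)) (η : TreeVtx k L → Bool) :
    occInd S η * occInd T η = occInd (S ∪ T) η := by
  classical
  simp only [occInd, ite_zero_mul_ite_zero, Finset.forall_mem_union, one_mul]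

lemma occInd_prod (S : Finset (TreeVtx k L)) (η : TreeVtx k L → Bool) :
    occInd S η = ∏ v ∈ S, (if η v then (1:ℝ) else 0) := by
  classical
  unfold occInd
  by_cases h : ∀ v ∈ S, η v = true
  · rw [if_pos h, Finset.prod_eq_one]
    intro v hv; simp [h v hv]
  · push_neg at h
    obtain ⟨v, hv, hvf⟩ := h
    rw [if_neg (by push_neg; exact ⟨v, hv, hvf⟩), eq_comm]
    exact Finset.prod_eq_zero hv (by simp [hvf])

lemma sum_bern_occInd (p : ℝ) (S : Finset (TreeVtx k L)) :
    ∑ η : TreeVtx k L → Bool, (∏ x, bern p (η x)) * occInd S η = p ^ S.card := by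
  classical
  have key : ∀ η : TreeVtx k L → Bool,
      (∏ x, bern p (η x)) * occInd S η
        = ∏ x, (bern p (η x) * if x ∈ S then (if η x then (1:ℝ) else 0) else 1) := by
    intro η
    rw [Finset.prod_mul_distrib, occInd_prod]
    congr 1
    rw [Finset.prod_ite_mem, Finset.univ_inter]
  simp only [key]
  rw [← Fintype.prod_sum (fun x (b : Bool) =>
    bern p b * if x ∈ S then (if b then (1:ℝ) else 0) else 1)]
  have : ∀ x : TreeVtx k L,
      (∑ b : Bool, bern p b * if x ∈ S then (if b then (1:ℝ) else 0) else 1)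
        = if x ∈ S then p else 1 := by
    intro x
    by_cases h : x ∈ S <;> simp [h, bern]
  rw [Fintype.prod_congr _ _ this, Finset.prod_ite_mem, Finset.univ_inter,
    Finset.prod_const]

/-! ### Path finsets -/

def pathFinset (x : TreeVtx k L) : Finset (TreeVtx k L) :=
  ((Finset.Iic x.1).attach).image
    (fun j => ancestor x j.1 (Fin.le_def.mp (Finset.mem_Iic.mp j.2)))

lemma card_pathFinset (x : TreeVtx k L) : (pathFinset x).card = (x.1 : ℕ) + 1 := by
  rw [pathFinset, Finset.card_image_of_injective, Finset.card_attach, Fin.card_Iic]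
  intro a b hab
  have : a.1 = b.1 := congrArg Sigma.fst hab
  exact Subtype.ext this

lemma mem_pathFinset {x v : TreeVtx k L} :
    v ∈ pathFinset x ↔ ∃ (j : Fin (L+1)) (h : (j:ℕ) ≤ (x.1:ℕ)), v = ancestor x j h := by
  constructor
  · rintro hv
    rw [pathFinset, Finset.mem_image] at hv
    obtain ⟨j, _, rfl⟩ := hv
    exact ⟨j.1, _, rfl⟩
  · rintro ⟨j, h, rfl⟩
    rw [pathFinset, Finset.mem_image]
    exact ⟨⟨j, Finset.mem_Iic.mpr (Fin.le_def.mpr h)⟩, Finset.mem_attach _ _, rfl⟩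

lemma inRootCluster_iff (η : TreeVtx k L → Bool) (x : TreeVtx k L) :
    inRootCluster η x ↔ ∀ v ∈ pathFinset x, η v = true := by
  constructor
  · intro h v hv
    obtain ⟨j, hj, rfl⟩ := mem_pathFinset.mp hv
    exact h j hj
  · intro h j hj
    exact h _ (mem_pathFinset.mpr ⟨j, hj, rfl⟩)

lemma clusterSize_eq (η : TreeVtx k L → Bool) :
    clusterSize k L η = ∑ x : TreeVtx k L, occInd (pathFinset x) η := by
  unfold clusterSize occInd
  exact Finset.sum_congr rfl (fun x _ => if_congr (inRootCluster_iff η x) rfl rfl)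

/-! ### Agreement sets -/

def agreeCond (x y : TreeVtx k L) (i : ℕ) : Prop :=
  i ≤ (x.1 : ℕ) ∧ i ≤ (y.1 : ℕ) ∧
    ∀ j, j < i → ∀ (hx : j < (x.1 : ℕ)) (hy : j < (y.1 : ℕ)), x.2 ⟨j, hx⟩ = y.2 ⟨j, hy⟩

instance (x y : TreeVtx k L) (i : ℕ) : Decidable (agreeCond x y i) := by
  unfold agreeCond; infer_instance

def agreeSet (x y : TreeVtx k L) : Finset ℕ :=
  (Finset.range (L + 1)).filter (agreeCond x y)

lemma agreeSet_dc (x y : TreeVtx k L) {i j : ℕ} (hj : j ≤ i) (hi : i ∈ agreeSet x y) :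
    j ∈ agreeSet x y := by
  rw [agreeSet, Finset.mem_filter, Finset.mem_range] at *
  obtain ⟨h1, h2, h3, h4⟩ := hi
  exact ⟨lt_of_le_of_lt hj h1, le_trans hj h2, le_trans hj h3,
    fun j' hj' => h4 j' (lt_of_lt_of_le hj' hj)⟩

lemma dc_eq_range {S : Finset ℕ} (h : ∀ i ∈ S, ∀ j ≤ i, j ∈ S) :
    S = Finset.range S.card := by
  have hsub : S ⊆ Finset.range S.card := by
    intro i hi
    rw [Finset.mem_range]
    have hss : Finset.range (i + 1) ⊆ S := by
      intro j hj
      exact h i hi j (Nat.lt_succ_iff.mp (Finset.mem_range.mp hj))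
    have := Finset.card_le_card hss
    rw [Finset.card_range] at this
    omega
  exact Finset.eq_of_subset_of_card_le hsub (by rw [Finset.card_range])

lemma agreeSet_eq_range (x y : TreeVtx k L) :
    agreeSet x y = Finset.range (agreeSet x y).card :=
  dc_eq_range (fun i hi j hj => agreeSet_dc x y hj hi)

lemma card_agreeSet_le (x y : TreeVtx k L) : (agreeSet x y).card ≤ L + 1 := by
  have := Finset.card_le_card (Finset.filter_subset (agreeCond x y) (Finset.range (L+1)))
  rwa [Finset.card_range] at this

lemma card_inter_paths (x y : TreeVtx k L) :
    (pathFinset x ∩ pathFinset y).card = (agreeSet x y).card := by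
  apply Finset.card_bij (fun v _ => (v.1 : ℕ))
  · intro v hv
    rw [Finset.mem_inter] at hv
    obtain ⟨hvx, hvy⟩ := hv
    obtain ⟨jx, hjx, hex⟩ := mem_pathFinset.mp hvx
    obtain ⟨jy, hjy, hey⟩ := mem_pathFinset.mp hvy
    have hjx1 : v.1 = jx := by rw [hex]; rfl
    have hjy1 : v.1 = jy := by rw [hey]; rfl
    subst hjx1
    have hjj : jy = v.1 := hjy1.symm
    subst hjj
    rw [agreeSet, Finset.mem_filter, Finset.mem_range]
    refine ⟨v.1.2, hjx, hjy, ?_⟩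
    intro j hj hx hy
    have heq : ancestor x v.1 hjx = ancestor y v.1 hjy := hex ▸ hey
    have h2 : (ancestor x v.1 hjx).2 = (ancestor y v.1 hjy).2 :=
      eq_of_heq (Sigma.ext_iff.mp heq).2
    exact congrFun h2 ⟨j, hj⟩
  · intro v hv w hw hval
    rw [Finset.mem_inter] at hv hw
    obtain ⟨jv, hjv, hev⟩ := mem_pathFinset.mp hv.1
    obtain ⟨jw, hjw, hew⟩ := mem_pathFinset.mp hw.1
    have h1 : v.1 = jv := by rw [hev]; rfl
    have h2 : w.1 = jw := by rw [hew]; rfl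
    have hjj : jv = jw := by
      apply Fin.ext; rw [← h1, ← h2]; exact hval
    subst hjj
    rw [hev, hew]
  · intro i hi
    rw [agreeSet, Finset.mem_filter, Finset.mem_range] at hi
    obtain ⟨hiL, h1, h2, h3⟩ := hi
    refine ⟨ancestor x ⟨i, hiL⟩ h1, Finset.mem_inter.mpr ⟨?_, ?_⟩, rfl⟩
    · exact mem_pathFinset.mpr ⟨⟨i, hiL⟩, h1, rfl⟩
    · refine mem_pathFinset.mpr ⟨⟨i, hiL⟩, h2, ?_⟩
      refine Sigma.ext rfl (heq_of_eq (funext fun j => ?_))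
      exact h3 j j.2 _ _

/-! ### Counting lemma -/

lemma count_prescribed (n i : ℕ) (hin : i ≤ n) (g : ∀ j, j < i → Fin k) :
    ∑ u : Fin n → Fin k,
      (if (∀ j (hj : j < i), u ⟨j, lt_of_lt_of_le hj hin⟩ = g j hj) then (1:ℝ) else 0)
      = (k : ℝ) ^ (n - i) := by
  classical
  have key : ∀ u : Fin n → Fin k,
      (if (∀ j (hj : j < i), u ⟨j, lt_of_lt_of_le hj hin⟩ = g j hj) then (1:ℝ) else 0)
        = ∏ j : Fin n, (if h : (j : ℕ) < i then (if u j = g j h then (1:ℝ) else 0) else 1) := by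
    intro u
    by_cases h : ∀ j (hj : j < i), u ⟨j, lt_of_lt_of_le hj hin⟩ = g j hj
    · rw [if_pos h, eq_comm, Finset.prod_eq_one]
      intro j _
      by_cases hj : (j : ℕ) < i
      · rw [dif_pos hj, if_pos]
        exact h j hj
      · rw [dif_neg hj]
    · push_neg at h
      obtain ⟨j, hj, hne⟩ := h
      rw [if_neg (by push_neg; exact ⟨j, hj, hne⟩), eq_comm]
      refine Finset.prod_eq_zero (Finset.mem_univ (⟨j, lt_of_lt_of_le hj hin⟩ : Fin n)) ?_
      rw [dif_pos hj, if_neg hne]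
  simp only [key]
  rw [← Fintype.prod_sum (fun (j : Fin n) (a : Fin k) =>
    if h : (j : ℕ) < i then (if a = g j h then (1:ℝ) else 0) else 1)]
  have hfac : ∀ j : Fin n,
      (∑ a : Fin k, if h : (j : ℕ) < i then (if a = g j h then (1:ℝ) else 0) else 1)
        = if (j : ℕ) < i then 1 else (k : ℝ) := by
    intro j
    by_cases h : (j : ℕ) < i
    · simp [h]
    · simp [h]
  rw [Fintype.prod_congr _ _ hfac,
    Fin.prod_univ_eq_prod_range (fun j => if j < i then (1:ℝ) else k)]
  rw [Finset.prod_ite, Finset.prod_const_one, one_mul, Finset.prod_const]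
  congr 1
  have hIco : Finset.filter (fun j => ¬ j < i) (Finset.range n) = Finset.Ico i n := by
    ext j; simp [Nat.not_lt, Finset.mem_Ico, and_comm]
  rw [hIco, Nat.card_Ico]

end Aux

section Aux2
variable {k L : ℕ}

lemma sum_sigma_vtx (f : TreeVtx k L → ℝ) :
    ∑ y : TreeVtx k L, f y = ∑ n : Fin (L+1), ∑ w : Fin (n:ℕ) → Fin k, f ⟨n, w⟩ := by
  rw [← Finset.univ_sigma_univ, Finset.sum_sigma]

lemma eval_level_sum (hk : 0 < k) (i : ℕ) :
    ∑ n ∈ Finset.range (L + 1), (if i ≤ n then ((k:ℝ) ^ (n - i)) else 0) * (1/k) ^ (n+1)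
      = (L + 1 - i : ℕ) * ((1:ℝ)/k) ^ (i+1) := by
  have hterm : ∀ n ∈ Finset.range (L+1),
      (if i ≤ n then ((k:ℝ) ^ (n - i)) else 0) * (1/k) ^ (n+1)
        = if i ≤ n then ((1:ℝ)/k) ^ (i+1) else 0 := by
    intro n _
    by_cases h : i ≤ n
    · rw [if_pos h, if_pos h]
      have hn : n + 1 = (n - i) + (i + 1) := by omega
      have hk0 : (k:ℝ) ≠ 0 := Nat.cast_ne_zero.mpr hk.ne'
      rw [hn, pow_add, ← mul_assoc, ← mul_pow]
      field_simp
      simp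
    · rw [if_neg h, if_neg h, zero_mul]
  rw [Finset.sum_congr rfl hterm, Finset.sum_ite, Finset.sum_const_zero, add_zero,
    Finset.sum_const]
  have hfil : Finset.filter (fun n => i ≤ n) (Finset.range (L+1)) = Finset.Ico i (L+1) := by
    ext n; simp [Finset.mem_Ico, and_comm]
  rw [hfil, Nat.card_Ico, nsmul_eq_mul]

lemma sum_y_side (hk : 0 < k) (x : TreeVtx k L) (i : ℕ) (him : i ≤ (x.1:ℕ)) :
    ∑ y : TreeVtx k L,
      (if (i ≤ (y.1:ℕ) ∧ ∀ j, j < i → ∀ (hx : j < (x.1:ℕ)) (hy : j < (y.1:ℕ)),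
          x.2 ⟨j, hx⟩ = y.2 ⟨j, hy⟩) then (1:ℝ) else 0) * (1/k) ^ ((y.1:ℕ)+1)
      = (L + 1 - i : ℕ) * ((1:ℝ)/k) ^ (i+1) := by
  rw [sum_sigma_vtx, ← eval_level_sum (L := L) hk i, ← Fin.sum_univ_eq_sum_range
    (fun n => (if i ≤ n then ((k:ℝ) ^ (n - i)) else 0) * (1/k) ^ (n+1))]
  apply Finset.sum_congr rfl
  intro n _
  show (∑ w : Fin (n:ℕ) → Fin k,
      (if (i ≤ (n:ℕ) ∧ ∀ j, j < i → ∀ (hx : j < (x.1:ℕ)) (hy : j < (n:ℕ)),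
          x.2 ⟨j, hx⟩ = w ⟨j, hy⟩) then (1:ℝ) else 0) * (1/k) ^ ((n:ℕ)+1)) = _
  rw [← Finset.sum_mul]
  congr 1
  by_cases h : i ≤ (n : ℕ)
  · rw [if_pos h, ← count_prescribed (k := k) (n : ℕ) i h
      (fun j hj => x.2 ⟨j, lt_of_lt_of_le hj him⟩)]
    apply Finset.sum_congr rfl
    intro w _
    refine if_congr ⟨?_, ?_⟩ rfl rfl
    · rintro ⟨-, hA⟩ j hj
      exact (hA j hj _ _).symm
    · intro hA
      exact ⟨h, fun j hj hx hy => (hA j hj).symm⟩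
  · rw [if_neg h]
    apply Finset.sum_eq_zero
    intro w _
    exact if_neg (fun hA => h hA.1)

lemma sum_x_side (hk : 0 < k) (i : ℕ) :
    ∑ x : TreeVtx k L, (if i ≤ (x.1:ℕ) then (1:ℝ) else 0) * (1/k) ^ ((x.1:ℕ)+1)
      = (L + 1 - i : ℕ) * ((1:ℝ)/k) := by
  rw [sum_sigma_vtx]
  have hk0 : (k:ℝ) ≠ 0 := Nat.cast_ne_zero.mpr hk.ne'
  have hin : ∀ n : Fin (L+1),
      (∑ _w : Fin (n:ℕ) → Fin k, (if i ≤ (n:ℕ) then (1:ℝ) else 0) * (1/k) ^ ((n:ℕ)+1))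
        = if i ≤ (n:ℕ) then (1:ℝ)/k else 0 := by
    intro n
    rw [Finset.sum_const, Finset.card_univ, nsmul_eq_mul]
    have hcard : Fintype.card (Fin (n:ℕ) → Fin k) = k ^ (n:ℕ) := by
      simp [Fintype.card_fun]
    rw [hcard]
    by_cases h : i ≤ (n:ℕ)
    · rw [if_pos h, if_pos h, one_mul, pow_succ, ← mul_assoc, Nat.cast_pow, ← mul_pow,
        mul_one_div_cancel hk0, one_pow, one_mul]
    · rw [if_neg h, if_neg h, zero_mul, mul_zero]
  rw [Fintype.sum_congr _ _ hin, Fin.sum_univ_eq_sum_range (fun n => if i ≤ n then (1:ℝ)/k else 0),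
    Finset.sum_ite, Finset.sum_const_zero, add_zero, Finset.sum_const]
  have hfil : Finset.filter (fun n => i ≤ n) (Finset.range (L+1)) = Finset.Ico i (L+1) := by
    ext n; simp [Finset.mem_Ico, and_comm]
  rw [hfil, Nat.card_Ico, nsmul_eq_mul]

end Aux2

section Aux3
variable {k L : ℕ}

lemma pair_term (hk2 : 2 ≤ k) (x y : TreeVtx k L) :
    ((1:ℝ)/k) ^ (pathFinset x ∪ pathFinset y).card
      - (1/k) ^ ((x.1:ℕ)+1) * (1/k) ^ ((y.1:ℕ)+1)
    = ((k:ℝ) - 1) * ∑ i ∈ Finset.range (L+1),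
        ((if agreeCond x y i then (k:ℝ)^i else 0)
          * ((1/k) ^ ((x.1:ℕ)+1) * (1/k) ^ ((y.1:ℕ)+1))) := by
  classical
  have hk0 : (k:ℝ) ≠ 0 := Nat.cast_ne_zero.mpr (by omega)
  set c := (agreeSet x y).card with hc
  set u := (pathFinset x ∪ pathFinset y).card with hu
  have hcard : u + c = ((x.1:ℕ)+1) + ((y.1:ℕ)+1) := by
    rw [hu, hc, ← card_inter_paths, Finset.card_union_add_card_inter,
      card_pathFinset, card_pathFinset]
  have hsum : (∑ i ∈ Finset.range (L+1), (if agreeCond x y i then (k:ℝ)^i else 0))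
      = ∑ i ∈ Finset.range c, (k:ℝ)^i := by
    rw [← Finset.sum_filter]
    have : (Finset.range (L+1)).filter (agreeCond x y) = agreeSet x y := rfl
    rw [this, agreeSet_eq_range]
  have hgeom : (∑ i ∈ Finset.range c, (k:ℝ)^i) * ((k:ℝ) - 1) = (k:ℝ)^c - 1 :=
    geom_sum_mul _ _
  have hkc : (k:ℝ)^c * ((1:ℝ)/k)^c = 1 := by
    rw [← mul_pow, mul_one_div_cancel hk0, one_pow]
  have hmn : ((1:ℝ)/k) ^ ((x.1:ℕ)+1) * (1/k) ^ ((y.1:ℕ)+1) = (1/k)^u * (1/k)^c := by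
    rw [← pow_add, ← pow_add, hcard]
  rw [← Finset.sum_mul, hsum, hmn]
  linear_combination (-(((1:ℝ)/k)^u * (1/k)^c)) * hgeom - ((1:ℝ)/k)^u * hkc

lemma T_eval (hk : 0 < k) (i : ℕ) :
    ∑ x : TreeVtx k L, ∑ y : TreeVtx k L,
      (if agreeCond x y i then (1:ℝ) else 0)
        * ((1/k) ^ ((x.1:ℕ)+1) * (1/k) ^ ((y.1:ℕ)+1))
      = (((L + 1 - i : ℕ)):ℝ)^2 * ((1:ℝ)/k)^(i+2) := by
  have hxy : ∀ x : TreeVtx k L,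
      (∑ y : TreeVtx k L, (if agreeCond x y i then (1:ℝ) else 0)
        * ((1/k) ^ ((x.1:ℕ)+1) * (1/k) ^ ((y.1:ℕ)+1)))
      = ((if i ≤ (x.1:ℕ) then (1:ℝ) else 0) * (1/k) ^ ((x.1:ℕ)+1))
          * ((L + 1 - i : ℕ) * ((1:ℝ)/k) ^ (i+1)) := by
    intro x
    by_cases him : i ≤ (x.1:ℕ)
    · rw [if_pos him, one_mul, ← sum_y_side hk x i him, Finset.mul_sum]
      apply Finset.sum_congr rfl
      intro y _
      have hiff : agreeCond x y i ↔ (i ≤ (y.1:ℕ) ∧ ∀ j, j < i →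
          ∀ (hx : j < (x.1:ℕ)) (hy : j < (y.1:ℕ)), x.2 ⟨j, hx⟩ = y.2 ⟨j, hy⟩) :=
        ⟨fun ⟨_, h2, h3⟩ => ⟨h2, h3⟩, fun ⟨h2, h3⟩ => ⟨him, h2, h3⟩⟩
      rw [if_congr hiff rfl rfl]
      ring
    · rw [if_neg him, zero_mul, zero_mul]
      apply Finset.sum_eq_zero
      intro y _
      rw [if_neg (fun hA => him hA.1), zero_mul]
  rw [Finset.sum_congr rfl (fun x _ => hxy x), ← Finset.sum_mul, sum_x_side hk i]
  ring

lemma mean_eq (p : ℝ) : meanClusterSize k L p = ∑ x : TreeVtx k L, p ^ ((x.1:ℕ)+1) := by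
  unfold meanClusterSize
  simp_rw [clusterSize_eq, Finset.mul_sum]
  rw [Finset.sum_comm]
  exact Finset.sum_congr rfl fun x _ => by rw [sum_bern_occInd, card_pathFinset]

lemma second_moment_eq (p : ℝ) :
    (∑ η : TreeVtx k L → Bool, (∏ v, bern p (η v)) * clusterSize k L η ^ 2)
      = ∑ x : TreeVtx k L, ∑ y : TreeVtx k L, p ^ (pathFinset x ∪ pathFinset y).card := by
  have hsq : ∀ η, clusterSize k L η ^ 2
      = ∑ x : TreeVtx k L, ∑ y : TreeVtx k L, occInd (pathFinset x ∪ pathFinset y) η := by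
    intro η
    rw [sq, clusterSize_eq, Finset.sum_mul_sum]
    exact Finset.sum_congr rfl fun x _ => Finset.sum_congr rfl fun y _ => occInd_mul _ _ η
  simp_rw [hsq, Finset.mul_sum]
  rw [Finset.sum_comm]
  refine Finset.sum_congr rfl fun x _ => ?_
  rw [Finset.sum_comm]
  exact Finset.sum_congr rfl fun y _ => sum_bern_occInd p _

lemma var_eq (hk2 : 2 ≤ k) : varClusterSize k L (1/(k:ℝ)) =
    ((k:ℝ) - 1) / (k:ℝ)^2 * ∑ i ∈ Finset.range (L+1), (((L + 1 - i : ℕ)):ℝ)^2 := by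
  have hk : 0 < k := by omega
  have hk0 : (k:ℝ) ≠ 0 := Nat.cast_ne_zero.mpr hk.ne'
  unfold varClusterSize
  rw [second_moment_eq, mean_eq, sq, Finset.sum_mul_sum, ← Finset.sum_sub_distrib]
  simp_rw [← Finset.sum_sub_distrib]
  have hpt : ∀ x y : TreeVtx k L,
      (1/(k:ℝ)) ^ (pathFinset x ∪ pathFinset y).card
        - (1/(k:ℝ)) ^ ((x.1:ℕ)+1) * (1/(k:ℝ)) ^ ((y.1:ℕ)+1)
      = ((k:ℝ) - 1) * ∑ i ∈ Finset.range (L+1),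
        ((if agreeCond x y i then (k:ℝ)^i else 0)
          * ((1/(k:ℝ)) ^ ((x.1:ℕ)+1) * (1/(k:ℝ)) ^ ((y.1:ℕ)+1))) := pair_term hk2
  calc
    ∑ x : TreeVtx k L, ∑ y : TreeVtx k L,
        ((1/(k:ℝ)) ^ (pathFinset x ∪ pathFinset y).card
          - (1/(k:ℝ)) ^ ((x.1:ℕ)+1) * (1/(k:ℝ)) ^ ((y.1:ℕ)+1))
      = ∑ x : TreeVtx k L, ∑ y : TreeVtx k L, ((k:ℝ) - 1) * ∑ i ∈ Finset.range (L+1),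
          ((if agreeCond x y i then (k:ℝ)^i else 0)
            * ((1/(k:ℝ)) ^ ((x.1:ℕ)+1) * (1/(k:ℝ)) ^ ((y.1:ℕ)+1))) := by
        exact Finset.sum_congr rfl fun x _ => Finset.sum_congr rfl fun y _ => hpt x y
    _ = ((k:ℝ) - 1) * ∑ i ∈ Finset.range (L+1), ∑ x : TreeVtx k L, ∑ y : TreeVtx k L,
          ((if agreeCond x y i then (k:ℝ)^i else 0)
            * ((1/(k:ℝ)) ^ ((x.1:ℕ)+1) * (1/(k:ℝ)) ^ ((y.1:ℕ)+1))) := by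
        simp_rw [← Finset.mul_sum]
        congr 1
        exact (Finset.sum_congr rfl fun x _ => Finset.sum_comm).trans Finset.sum_comm
    _ = ((k:ℝ) - 1) * ∑ i ∈ Finset.range (L+1),
          (k:ℝ)^i * ((((L + 1 - i : ℕ)):ℝ)^2 * ((1:ℝ)/k)^(i+2)) := by
        congr 1
        apply Finset.sum_congr rfl
        intro i _
        rw [← T_eval (L := L) hk i, Finset.mul_sum]
        apply Finset.sum_congr rfl
        intro x _
        rw [Finset.mul_sum]
        apply Finset.sum_congr rfl
        intro y _
        by_cases h : agreeCond x y i
        · rw [if_pos h, if_pos h, one_mul]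
        · rw [if_neg h, if_neg h, zero_mul, mul_zero]
    _ = ((k:ℝ) - 1) / (k:ℝ)^2 * ∑ i ∈ Finset.range (L+1), (((L + 1 - i : ℕ)):ℝ)^2 := by
        rw [Finset.mul_sum, Finset.mul_sum]
        apply Finset.sum_congr rfl
        intro i _
        have key : ((k:ℝ))^i * ((1:ℝ)/k)^(i+2) = 1/(k:ℝ)^2 := by
          rw [pow_add, ← mul_assoc, ← mul_pow, mul_one_div_cancel hk0, one_pow, one_mul,
            div_pow, one_pow]
        linear_combination ((k:ℝ) - 1) * (((L + 1 - i : ℕ):ℝ)^2) * key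

end Aux3

lemma reindex_sq (L : ℕ) :
    ∑ i ∈ Finset.range (L+1), (((L + 1 - i : ℕ)):ℝ)^2
      = ∑ j ∈ Finset.Icc 1 (L+1), (j:ℝ)^2 := by
  have h1 : ∀ i ∈ Finset.range (L+1),
      (((L + 1 - i : ℕ)):ℝ)^2 = (fun j => (((j + 1 : ℕ)):ℝ)^2) (L + 1 - 1 - i) := by
    intro i hi
    rw [Finset.mem_range] at hi
    congr 2
    omega
  rw [Finset.sum_congr rfl h1, Finset.sum_range_reflect (fun j => (((j + 1 : ℕ)):ℝ)^2) (L+1),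
    ← Finset.Ico_add_one_right_eq_Icc, Finset.sum_Ico_eq_sum_range]
  apply Finset.sum_congr (by norm_num)
  intro i _
  congr 2
  omega

lemma cube_le_three_sum_sq (n : ℕ) : n ^ 3 ≤ 3 * ∑ j ∈ Finset.Icc 1 n, j ^ 2 := by
  induction n with
  | zero => simp
  | succ n ih =>
    rw [Finset.sum_Icc_succ_top (by omega)]
    have h3 : 3*n^2+3*n+1 ≤ 3*(n+1)^2 := by nlinarith
    calc (n+1)^3 = n^3 + (3*n^2+3*n+1) := by ring
      _ ≤ 3*(∑ j ∈ Finset.Icc 1 n, j^2) + 3*(n+1)^2 := Nat.add_le_add ih h3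
      _ = 3*((∑ j ∈ Finset.Icc 1 n, j^2) + (n+1)^2) := by ring


/-- For `k ≥ 2`, `p = 1/k`, and the Bernoulli(p) product measure on the
`k`-ary rooted tree of depth `L`, the variance of the root cluster size is
`Var(N_r) = ((k-1)/k²) ∑_{j=1}^{L+1} j²`; in particular there is a constant `c' > 0`
depending only on `k` such that `Var(N_r) ≥ c' L³`. -/
theorem var_cluster_size_critical (k : ℕ) (hk : 2 ≤ k) :
    (∀ L : ℕ, varClusterSize k L (1 / k) =
        ((k : ℝ) - 1) / (k : ℝ) ^ 2 * ∑ j ∈ Finset.Icc 1 (L + 1), (j : ℝ) ^ 2) ∧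
      ∃ c' : ℝ, 0 < c' ∧ ∀ L : ℕ, c' * (L : ℝ) ^ 3 ≤ varClusterSize k L (1 / k) := by
  have hmain : ∀ L : ℕ, varClusterSize k L (1 / k) =
      ((k : ℝ) - 1) / (k : ℝ) ^ 2 * ∑ j ∈ Finset.Icc 1 (L + 1), (j : ℝ) ^ 2 := by
    intro L
    rw [var_eq hk, reindex_sq]
  refine ⟨hmain, ((k:ℝ) - 1) / (3 * (k:ℝ)^2), ?_, ?_⟩
  · have hk1 : (1:ℝ) ≤ (k:ℝ) - 1 := by
      have : (2:ℝ) ≤ (k:ℝ) := by exact_mod_cast hk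
      linarith
    have hk2 : (0:ℝ) < (k:ℝ)^2 := by positivity
    positivity
  · intro L
    rw [hmain L]
    have hsum : ((L:ℝ))^3 ≤ 3 * ∑ j ∈ Finset.Icc 1 (L+1), (j:ℝ)^2 := by
      have h1 := cube_le_three_sum_sq (L + 1)
      have h2 : L ^ 3 ≤ (L + 1) ^ 3 := Nat.pow_le_pow_left (by omega) 3
      have h3 : L ^ 3 ≤ 3 * ∑ j ∈ Finset.Icc 1 (L+1), j ^ 2 := le_trans h2 h1
      have := (Nat.cast_le (α := ℝ)).mpr h3
      push_cast at this
      convert this using 2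
    have hpos : (0:ℝ) < ((k:ℝ) - 1) / (k:ℝ)^2 := by
      have : (2:ℝ) ≤ (k:ℝ) := by exact_mod_cast hk
      have h1 : (0:ℝ) < (k:ℝ) - 1 := by linarith
      positivity
    calc ((k:ℝ) - 1) / (3 * (k:ℝ)^2) * (L:ℝ)^3
        = (((k:ℝ) - 1) / (k:ℝ)^2) * ((L:ℝ)^3 / 3) := by ring
      _ ≤ (((k:ℝ) - 1) / (k:ℝ)^2) * ∑ j ∈ Finset.Icc 1 (L+1), (j:ℝ)^2 := by
          apply mul_le_mul_of_nonneg_left _ hpos.le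
          linarith
end
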